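/- (Real Representation Theorem) Let A be a commutative ring and T ⊆ A a weakly divisible archimedean semiring. If a ∈ A satisfies φ(a) > 0 for every ring homomorphism φ : A → ℝ with φ(T) ⊆ [0,∞), then a ∈ T. -/

import Mathlib

section RRT
variable {A : Type*} [CommRing A] {T : Set A}

lemma rrt_nat (h0 : (0 : A) ∈ T) (h1 : (1 : A) ∈ T)
    (hadd : ∀ x ∈ T, ∀ y ∈ T, x + y ∈ T) : ∀ n : ℕ, ((n : ℕ) : A) ∈ T := by
  intro n
  induction n with
  | zero => simpa using h0
  | succ n ih => push_cast; exact hadd _ ih _ h1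

lemma rrt_intnn (h0 : (0 : A) ∈ T) (h1 : (1 : A) ∈ T)
    (hadd : ∀ x ∈ T, ∀ y ∈ T, x + y ∈ T) : ∀ k : ℤ, 0 ≤ k → ((k : ℤ) : A) ∈ T := by
  intro k hk
  lift k to ℕ using hk
  exact_mod_cast rrt_nat h0 h1 hadd k

lemma rrt_pow (h1 : (1 : A) ∈ T) (hmul : ∀ x ∈ T, ∀ y ∈ T, x * y ∈ T)
    {x : A} (hx : x ∈ T) : ∀ m : ℕ, x ^ m ∈ T := by
  intro m
  induction m with
  | zero => simpa using h1
  | succ m ih => rw [pow_succ]; exact hmul _ ih _ hx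

lemma rrt_bound (h0 : (0 : A) ∈ T) (h1 : (1 : A) ∈ T)
    (hadd : ∀ x ∈ T, ∀ y ∈ T, x + y ∈ T)
    (harch : ∀ a : A, ∃ n : ℤ, ∃ t ∈ T, a = (n : A) + t) :
    ∀ x : A, ∃ N : ℕ, (N : A) - x ∈ T := by
  intro x
  obtain ⟨n, t, ht, hx⟩ := harch (-x)
  refine ⟨(-n).toNat, ?_⟩
  have h2 : ((((-n).toNat : ℤ) + n : ℤ) : A) ∈ T := by
    apply rrt_intnn h0 h1 hadd; omega
  have heq : ((-n).toNat : A) - x = ((((-n).toNat : ℤ) + n : ℤ) : A) + t := by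
    have : -x = (n : A) + t := hx
    push_cast
    linear_combination this
  rw [heq]
  exact hadd _ h2 _ ht

lemma rrt_powsub (h0 : (0 : A) ∈ T) (h1 : (1 : A) ∈ T) (hadd : ∀ x ∈ T, ∀ y ∈ T, x + y ∈ T)
    (hmul : ∀ x ∈ T, ∀ y ∈ T, x * y ∈ T)
    {x y : A} (hx : x ∈ T) (hy : y ∈ T) (hxy : x - y ∈ T) :
    ∀ n : ℕ, x ^ n - y ^ n ∈ T := by
  intro n
  induction n with
  | zero =>
      have : x ^ 0 - y ^ 0 = 0 := by ring
      rw [this]; exact h0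
  | succ n ih =>
      have : x ^ (n+1) - y ^ (n+1) = x * (x ^ n - y ^ n) + y ^ n * (x - y) := by ring
      rw [this]
      exact hadd _ (hmul _ hx _ ih) _ (hmul _ (rrt_pow h1 hmul hy n) _ hxy)

end RRT

section Div
variable {A : Type*} [CommRing A] {T : Set A}

lemma rrt_numeric : ∀ s : ℕ, 1 ≤ s → ∃ n : ℕ, (s-1)^(n+1) * s ≤ s^(n+1) := by
  intro s hs
  rcases lt_or_ge s 2 with h2 | h2
  · refine ⟨0, ?_⟩
    have : s = 1 := by omega
    subst this; simp
  · have hs0 : (0:ℝ) < (s:ℝ) := by positivity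
    have hlt : ((s:ℝ)-1)/s < 1 := by
      rw [div_lt_one hs0]; linarith
    have hnn : (0:ℝ) ≤ ((s:ℝ)-1)/s := by
      apply div_nonneg _ (le_of_lt hs0)
      have : (1:ℝ) ≤ (s:ℝ) := by exact_mod_cast hs
      linarith
    obtain ⟨n, hn⟩ := exists_pow_lt_of_lt_one (show (0:ℝ) < 1/s by positivity) hlt
    have hR : ((s:ℝ)-1)^n * s < s^n := by
      rw [div_pow, div_lt_div_iff₀ (by positivity) hs0] at hn
      linarith
    have hN : (s-1)^n * s ≤ s^n := by
      have hc : (((s-1:ℕ)):ℝ) = (s:ℝ) - 1 := by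
        push_cast [Nat.cast_sub hs]; ring
      have : (((s-1)^n * s : ℕ) : ℝ) ≤ ((s^n : ℕ) : ℝ) := by
        push_cast [hc]
        exact le_of_lt hR
      exact_mod_cast this
    refine ⟨n, ?_⟩
    calc (s-1)^(n+1) * s = (s-1) * ((s-1)^n * s) := by ring
    _ ≤ (s-1) * s^n := Nat.mul_le_mul_left _ hN
    _ ≤ s * s^n := Nat.mul_le_mul_right _ (by omega)
    _ = s^(n+1) := by ring

lemma rrt_core (h0 : (0 : A) ∈ T) (h1 : (1 : A) ∈ T)
    (hadd : ∀ x ∈ T, ∀ y ∈ T, x + y ∈ T)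
    (hmul : ∀ x ∈ T, ∀ y ∈ T, x * y ∈ T)
    {r : ℕ} {u : A} (hr : 2 ≤ r) (hru : (r : A) * u = 1) (hu : u ∈ T) :
    ∀ (p : ℕ) (t c : A), t ∈ T → 1 - t ∈ T → 1 + c ∈ T → 1 - c ∈ T →
      t * c - u ^ p ∈ T → c ∈ T := by
  intro p t c ht hvt hc1 hc2 htc
  set ε := u ^ p with hε
  have hεT : ε ∈ T := rrt_pow h1 hmul hu p
  have hrp : ((r^p : ℕ) : A) * ε = 1 := by
    push_cast; rw [hε, ← mul_pow, hru, one_pow]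
  have htε : t - ε ∈ T := by
    have heq : t - ε = t * (1 - c) + (t * c - ε) := by ring
    rw [heq]; exact hadd _ (hmul _ ht _ hc2) _ htc
  set v := 1 - t with hv
  have hvT : v ∈ T := hvt
  have claim1 : ∀ n : ℕ, c - v ^ (n+1) * c - ε ∈ T := by
    intro n
    induction n with
    | zero =>
        have heq : c - v ^ 1 * c - ε = t * c - ε := by rw [hv]; ring
        rw [heq]; exact htc
    | succ n ih =>
        have heq : c - v ^ (n+1+1) * c - ε =
            (c - v ^ (n+1) * c - ε) + (v ^ (n+1) * (t * c - ε) + v ^ (n+1) * ε) := by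
          rw [hv]; ring
        rw [heq]
        exact hadd _ ih _ (hadd _ (hmul _ (rrt_pow h1 hmul hvT _) _ htc) _
          (hmul _ (rrt_pow h1 hmul hvT _) _ hεT))
  have hs1 : 1 ≤ r ^ p := Nat.one_le_pow _ _ (by omega)
  set w : A := ((r^p - 1 : ℕ) : A) * ε with hw
  have hwT : w ∈ T := hmul _ (rrt_nat h0 h1 hadd _) _ hεT
  have hw1 : w = 1 - ε := by
    rw [hw, ← hrp]; push_cast [Nat.cast_sub hs1]; ring
  have hwvT : w - v ∈ T := by
    have heq : w - v = t - ε := by rw [hw1, hv]; ring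
    rw [heq]; exact htε
  obtain ⟨n, hn⟩ := rrt_numeric (r^p) hs1
  have hle : (r^p - 1)^(n+1) ≤ (r^p)^n := by
    have h2 : (r^p)^(n+1) = (r^p)^n * r^p := by ring
    rw [h2] at hn
    exact Nat.le_of_mul_le_mul_right hn (by omega)
  have hkey : ε - w ^ (n+1) ∈ T := by
    have hwpow : w ^ (n+1) = (((r^p-1)^(n+1) : ℕ) : A) * ε ^ (n+1) := by
      rw [hw]; push_cast; ring
    have hεeq : ε = (((r^p)^n : ℕ) : A) * ε ^ (n+1) := by
      have h2 : (((r^p)^n : ℕ) : A) * ε ^ n = 1 := by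
        push_cast
        calc ((r:A)^p)^n * ε ^ n = ((r:A)^p * ε) ^ n := by rw [mul_pow]
        _ = 1 := by
              have : ((r:A))^p * ε = 1 := by push_cast at hrp; exact hrp
              rw [this]; simp
      calc ε = (((r^p)^n : ℕ) : A) * ε ^ n * ε := by rw [h2]; ring
      _ = (((r^p)^n : ℕ) : A) * ε ^ (n+1) := by ring
    have heq : ε - w ^ (n+1) = (((r^p)^n - (r^p-1)^(n+1) : ℕ) : A) * ε ^ (n+1) := by
      rw [Nat.cast_sub hle]
      linear_combination hεeq - hwpow
    rw [heq]
    exact hmul _ (rrt_nat h0 h1 hadd _) _ (rrt_pow h1 hmul hεT _)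
  have hfin : c = (c - v^(n+1)*c - ε) + v^(n+1)*(1+c) + (w^(n+1) - v^(n+1)) + (ε - w^(n+1)) := by
    ring
  rw [hfin]
  exact hadd _ (hadd _ (hadd _ (claim1 n) _ (hmul _ (rrt_pow h1 hmul hvT _) _ hc1)) _
    (rrt_powsub h0 h1 hadd hmul hwT hvT hwvT (n+1))) _ hkey

lemma rrt_div (h0 : (0 : A) ∈ T) (h1 : (1 : A) ∈ T)
    (hadd : ∀ x ∈ T, ∀ y ∈ T, x + y ∈ T)
    (hmul : ∀ x ∈ T, ∀ y ∈ T, x * y ∈ T)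
    (harch : ∀ a : A, ∃ n : ℤ, ∃ t ∈ T, a = (n : A) + t)
    {r : ℕ} {u : A} (hr : 2 ≤ r) (hru : (r : A) * u = 1) (hu : u ∈ T) :
    ∀ t c : A, t ∈ T → t * c - 1 ∈ T → c ∈ T := by
  intro t c ht htc
  obtain ⟨N1, hN1⟩ := rrt_bound h0 h1 hadd harch t
  obtain ⟨N2, hN2⟩ := rrt_bound h0 h1 hadd harch c
  obtain ⟨N3, hN3⟩ := rrt_bound h0 h1 hadd harch (-c)
  set N := N1 + N2 + N3 with hN
  have hsub : ∀ M : ℕ, ∀ x : A, M ≤ N → (M:A) - x ∈ T → (N:A) - x ∈ T := by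
    intro M x hM hMx
    have heq : (N:A) - x = ((N - M : ℕ) : A) + ((M:A) - x) := by
      push_cast [Nat.cast_sub hM]; ring
    rw [heq]; exact hadd _ (rrt_nat h0 h1 hadd _) _ hMx
  have hNt : (N:A) - t ∈ T := hsub N1 t (by omega) hN1
  have hNc : (N:A) - c ∈ T := hsub N2 c (by omega) hN2
  have hNc' : (N:A) + c ∈ T := by
    have := hsub N3 (-c) (by omega) hN3
    simpa [sub_neg_eq_add] using this
  -- choose m with N ≤ r ^ m
  have hm : N ≤ r ^ N := by
    calc N ≤ 2 ^ N := Nat.le_of_lt (Nat.lt_two_pow_self (n := N))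
    _ ≤ r ^ N := Nat.pow_le_pow_left hr N
  set m := N with hmdef
  have hq : ((r^m : ℕ) : A) * u ^ m = 1 := by
    push_cast; rw [← mul_pow, hru, one_pow]
  have split : ∀ x : A, (N:A) - x ∈ T → 1 - x * u^m ∈ T := by
    intro x hx
    have heq : 1 - x * u^m = (((r^m - N : ℕ):A) + ((N:A) - x)) * u^m := by
      rw [← hq, Nat.cast_sub (show N ≤ r^m from hm)]; push_cast; ring
    rw [heq]
    exact hmul _ (hadd _ (rrt_nat h0 h1 hadd _) _ hx) _ (rrt_pow h1 hmul hu m)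
  have h1t : 1 - t * u^m ∈ T := split t hNt
  have h1c : 1 - c * u^m ∈ T := split c hNc
  have h1c' : 1 + c * u^m ∈ T := by
    have heq : 1 + c * u^m = (((r^m - N : ℕ):A) + ((N:A) + c)) * u^m := by
      rw [← hq, Nat.cast_sub (show N ≤ r^m from hm)]; push_cast; ring
    rw [heq]
    exact hmul _ (hadd _ (rrt_nat h0 h1 hadd _) _ hNc') _ (rrt_pow h1 hmul hu m)
  have htc' : (t * u^m) * (c * u^m) - u^(2*m) ∈ T := by
    have heq : (t * u^m) * (c * u^m) - u^(2*m) = (t*c - 1) * u^(2*m) := by ring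
    rw [heq]; exact hmul _ htc _ (rrt_pow h1 hmul hu _)
  have hc' : c * u^m ∈ T :=
    rrt_core h0 h1 hadd hmul hr hru hu (2*m) (t * u^m) (c * u^m)
      (hmul _ ht _ (rrt_pow h1 hmul hu m)) h1t h1c' h1c htc'
  have heq : c = ((r^m : ℕ) : A) * (c * u^m) := by
    calc c = (((r^m : ℕ) : A) * u ^ m) * c := by rw [hq]; ring
    _ = ((r^m : ℕ) : A) * (c * u^m) := by ring
  rw [heq]
  exact hmul _ (rrt_nat h0 h1 hadd _) _ hc'

end Div

noncomputable def rrtU {A : Type*} [CommRing A] (r : ℕ) (u : A) (Q : Set A) (x : A) : Set ℝ :=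
  {z | ∃ k : ℤ, ∃ m : ℕ, z = (k : ℝ) / (r : ℝ) ^ m ∧ (k : A) * u ^ m - x ∈ Q}

noncomputable def rrtPhi {A : Type*} [CommRing A] (r : ℕ) (u : A) (Q : Set A) (x : A) : ℝ :=
  sInf (rrtU r u Q x)

section Hom
variable {A : Type*} [CommRing A] {T : Set A}

lemma rrt_hom (h0 : (0 : A) ∈ T) (h1 : (1 : A) ∈ T)
    (hadd : ∀ x ∈ T, ∀ y ∈ T, x + y ∈ T)
    (hmul : ∀ x ∈ T, ∀ y ∈ T, x * y ∈ T)
    (harch : ∀ a : A, ∃ n : ℤ, ∃ t ∈ T, a = (n : A) + t)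
    {r : ℕ} {u : A} (hr : 2 ≤ r) (hru : (r : A) * u = 1) (hu : u ∈ T)
    (Q : Set A) (hTQ : T ⊆ Q)
    (hQadd : ∀ x ∈ Q, ∀ y ∈ Q, x + y ∈ Q)
    (hQsmul : ∀ t ∈ T, ∀ x ∈ Q, t * x ∈ Q)
    (hQtot : ∀ b : A, b ∈ Q ∨ -b ∈ Q)
    (hQn1 : (-1 : A) ∉ Q) :
    ∃ φ : A →+* ℝ, ∀ x ∈ Q, 0 ≤ φ x := by
  set φ : A → ℝ := rrtPhi r u Q with hφ
  have hrum : ∀ m : ℕ, ((r : A)) ^ m * u ^ m = 1 := by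
    intro m; rw [← mul_pow, hru, one_pow]
  have hrR : (1:ℝ) < (r:ℝ) := by exact_mod_cast (by omega : 1 < r)
  have hrpos : ∀ m : ℕ, (0:ℝ) < (r : ℝ) ^ m := fun m => pow_pos (by linarith) m
  have keyid : ∀ (k k' : ℤ) (m m' : ℕ),
      (k' : A) * u ^ m' - (k : A) * u ^ m
        = ((k' * (r:ℤ) ^ m - k * (r:ℤ) ^ m' : ℤ) : A) * u ^ (m + m') := by
    intro k k' m m'
    push_cast
    linear_combination (-(k' : A) * u ^ m') * (hrum m) + ((k : A) * u ^ m) * (hrum m')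
  have notnegQ : ∀ k : ℤ, k < 0 → ((k : ℤ) : A) ∉ Q := by
    intro k hk hmem
    apply hQn1
    have h2 : ((-1 - k).toNat : A) ∈ Q := hTQ (rrt_nat h0 h1 hadd _)
    have heq : (-1 : A) = ((k : ℤ) : A) + ((-1 - k).toNat : A) := by
      have : (((-1 - k).toNat : ℤ) : A) = ((-1 - k : ℤ) : A) := by
        congr 1; omega
      push_cast at this ⊢
      rw [this]; push_cast; ring
    rw [heq]
    exact hQadd _ hmem _ h2
  have notnegD : ∀ (k : ℤ) (m : ℕ), (k : A) * u ^ m ∈ Q → 0 ≤ k := by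
    intro k m hmem
    by_contra hk
    push_neg at hk
    apply notnegQ k hk
    have heq : ((k : ℤ) : A) = ((r ^ m : ℕ) : A) * ((k : A) * u ^ m) := by
      push_cast
      linear_combination (-(k:A)) * (hrum m)
    rw [heq]
    exact hQsmul _ (rrt_nat h0 h1 hadd _) _ hmem
  have hDsub : ∀ (k k' : ℤ) (m m' : ℕ), k * (r:ℤ) ^ m' ≤ k' * (r:ℤ) ^ m →
      (k' : A) * u ^ m' - (k : A) * u ^ m ∈ T := by
    intro k k' m m' hle
    rw [keyid k k' m m']
    exact hmul _ (rrt_intnn h0 h1 hadd _ (by omega)) _ (rrt_pow h1 hmul hu _)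
  have sep : ∀ (k k' : ℤ) (m m' : ℕ) (x : A), x - (k : A) * u ^ m ∈ Q →
      (k' : A) * u ^ m' - x ∈ Q → (k : ℝ) / (r:ℝ) ^ m ≤ (k' : ℝ) / (r:ℝ) ^ m' := by
    intro k k' m m' x hx hx'
    have hsum : (k' : A) * u ^ m' - (k : A) * u ^ m ∈ Q := by
      have heq : (k' : A) * u ^ m' - (k : A) * u ^ m = ((k':A) * u ^ m' - x) + (x - (k:A) * u ^ m) := by ring
      rw [heq]; exact hQadd _ hx' _ hx
    rw [keyid k k' m m'] at hsum
    have hnn : 0 ≤ k' * (r:ℤ) ^ m - k * (r:ℤ) ^ m' := notnegD _ _ hsum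
    rw [div_le_div_iff₀ (hrpos m) (hrpos m')]
    exact_mod_cast (by omega : k * (r:ℤ) ^ m' ≤ k' * (r:ℤ) ^ m)
  have upmono : ∀ (k k' : ℤ) (m m' : ℕ) (x : A), (k : A) * u ^ m - x ∈ Q →
      (k : ℝ) / (r:ℝ) ^ m ≤ (k' : ℝ) / (r:ℝ) ^ m' → (k' : A) * u ^ m' - x ∈ Q := by
    intro k k' m m' x hx hle
    have hle' : k * (r:ℤ) ^ m' ≤ k' * (r:ℤ) ^ m := by
      rw [div_le_div_iff₀ (hrpos m) (hrpos m')] at hle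
      exact_mod_cast hle
    have heq : (k' : A) * u ^ m' - x = ((k':A) * u ^ m' - (k:A) * u ^ m) + ((k:A) * u ^ m - x) := by ring
    rw [heq]
    exact hQadd _ (hTQ (hDsub k k' m m' hle')) _ hx
  have hUne : ∀ x : A, (rrtU r u Q x).Nonempty := by
    intro x
    obtain ⟨N, hN⟩ := rrt_bound h0 h1 hadd harch x
    refine ⟨(N:ℝ), (N:ℤ), 0, by simp, ?_⟩
    have heq : ((N:ℤ) : A) * u ^ 0 - x = (N : A) - x := by push_cast; ring
    rw [heq]; exact hTQ hN
  have hlow : ∀ x : A, ∃ (k : ℤ) (m : ℕ), x - (k : A) * u ^ m ∈ Q := by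
    intro x
    obtain ⟨N, hN⟩ := rrt_bound h0 h1 hadd harch (-x)
    refine ⟨-(N:ℤ), 0, ?_⟩
    have heq : x - ((-(N:ℤ) : ℤ) : A) * u ^ 0 = (N : A) - (-x) := by push_cast; ring
    rw [heq]; exact hTQ hN
  have hbdd : ∀ x : A, BddBelow (rrtU r u Q x) := by
    intro x
    obtain ⟨k0, m0, hk0⟩ := hlow x
    refine ⟨(k0:ℝ)/(r:ℝ)^m0, ?_⟩
    rintro z ⟨k, m, rfl, hkm⟩
    exact sep k0 k m0 m x hk0 hkm
  have phile : ∀ (x : A) (k : ℤ) (m : ℕ), (k : A) * u ^ m - x ∈ Q →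
      φ x ≤ (k : ℝ) / (r:ℝ) ^ m := by
    intro x k m hmem
    exact csInf_le (hbdd x) ⟨k, m, rfl, hmem⟩
  have phige : ∀ (x : A) (k : ℤ) (m : ℕ), x - (k : A) * u ^ m ∈ Q →
      (k : ℝ) / (r:ℝ) ^ m ≤ φ x := by
    intro x k m hmem
    apply le_csInf (hUne x)
    rintro z ⟨k', m', rfl, hk'⟩
    exact sep k k' m m' x hmem hk'
  have memQ_of_lt : ∀ (x : A) (k : ℤ) (m : ℕ), φ x < (k : ℝ) / (r:ℝ) ^ m →
      (k : A) * u ^ m - x ∈ Q := by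
    intro x k m hlt
    obtain ⟨z, ⟨k1, m1, rfl, hz1⟩, hzlt⟩ := exists_lt_of_csInf_lt (hUne x) hlt
    exact upmono k1 k m1 m x hz1 (le_of_lt hzlt)
  have memQ_of_gt : ∀ (x : A) (k : ℤ) (m : ℕ), (k : ℝ) / (r:ℝ) ^ m < φ x →
      x - (k : A) * u ^ m ∈ Q := by
    intro x k m hlt
    rcases hQtot ((k : A) * u ^ m - x) with h | h
    · exact absurd (phile x k m h) (not_le.mpr hlt)
    · simpa using h
  have dens : ∀ z ε : ℝ, 0 < ε → ∃ (k : ℤ) (m : ℕ),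
      z < (k : ℝ) / (r:ℝ) ^ m ∧ (k : ℝ) / (r:ℝ) ^ m < z + ε := by
    intro z ε hε
    obtain ⟨m, hm⟩ := pow_unbounded_of_one_lt (1/ε) hrR
    refine ⟨⌊z * (r:ℝ)^m⌋ + 1, m, ?_, ?_⟩
    · rw [lt_div_iff₀ (hrpos m)]
      push_cast
      exact Int.lt_floor_add_one _
    · rw [div_lt_iff₀ (hrpos m)]
      have h2 : (⌊z * (r:ℝ)^m⌋ : ℝ) ≤ z * (r:ℝ)^m := Int.floor_le _
      have h3 : 1 < ε * (r:ℝ)^m := by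
        rw [div_lt_iff₀ hε] at hm
        linarith [hm]
      push_cast
      nlinarith [hrpos m]
  have combine2 : ∀ (k l : ℤ) (m n : ℕ),
      (k : A) * u ^ m + (l : A) * u ^ n
        = ((k * (r:ℤ) ^ n + l * (r:ℤ) ^ m : ℤ) : A) * u ^ (m + n) := by
    intro k l m n
    push_cast
    linear_combination (-(k : A) * u ^ m) * (hrum n) + (-(l : A) * u ^ n) * (hrum m)
  have valadd : ∀ (k l : ℤ) (m n : ℕ),
      ((k * (r:ℤ) ^ n + l * (r:ℤ) ^ m : ℤ) : ℝ) / (r:ℝ) ^ (m + n)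
        = (k : ℝ) / (r:ℝ) ^ m + (l : ℝ) / (r:ℝ) ^ n := by
    intro k l m n
    rw [pow_add]
    push_cast
    rw [div_add_div _ _ (ne_of_gt (hrpos m)) (ne_of_gt (hrpos n))]
    rw [div_eq_div_iff (by positivity) (by positivity)]
    ring
  have valmul : ∀ (k l : ℤ) (m n : ℕ),
      ((k * l : ℤ) : ℝ) / (r:ℝ) ^ (m + n)
        = ((k : ℝ) / (r:ℝ) ^ m) * ((l : ℝ) / (r:ℝ) ^ n) := by
    intro k l m n
    rw [pow_add, div_mul_div_comm]
    push_cast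
    ring
  have phiadd : ∀ x y : A, φ (x + y) = φ x + φ y := by
    intro x y
    have hle : φ (x + y) ≤ φ x + φ y := by
      apply le_of_forall_pos_le_add
      intro ε hε
      obtain ⟨k, m, hk1, hk2⟩ := dens (φ x) (ε/2) (by linarith)
      obtain ⟨l, n, hl1, hl2⟩ := dens (φ y) (ε/2) (by linarith)
      have hkQ := memQ_of_lt x k m hk1
      have hlQ := memQ_of_lt y l n hl1
      have hsum : ((k * (r:ℤ) ^ n + l * (r:ℤ) ^ m : ℤ) : A) * u ^ (m + n) - (x + y) ∈ Q := by
        have heq : ((k * (r:ℤ) ^ n + l * (r:ℤ) ^ m : ℤ) : A) * u ^ (m + n) - (x + y)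
            = ((k : A) * u ^ m - x) + ((l : A) * u ^ n - y) := by
          rw [← combine2]; ring
        rw [heq]; exact hQadd _ hkQ _ hlQ
      have := phile (x + y) _ _ hsum
      rw [valadd] at this
      linarith
    have hge : φ x + φ y ≤ φ (x + y) := by
      apply le_of_forall_pos_le_add
      intro ε hε
      obtain ⟨k, m, hk1, hk2⟩ := dens (φ x - ε/2) (ε/2) (by linarith)
      obtain ⟨l, n, hl1, hl2⟩ := dens (φ y - ε/2) (ε/2) (by linarith)
      have hkQ := memQ_of_gt x k m (by linarith)
      have hlQ := memQ_of_gt y l n (by linarith)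
      have hsum : (x + y) - ((k * (r:ℤ) ^ n + l * (r:ℤ) ^ m : ℤ) : A) * u ^ (m + n) ∈ Q := by
        have heq : (x + y) - ((k * (r:ℤ) ^ n + l * (r:ℤ) ^ m : ℤ) : A) * u ^ (m + n)
            = (x - (k : A) * u ^ m) + (y - (l : A) * u ^ n) := by
          rw [← combine2]; ring
        rw [heq]; exact hQadd _ hkQ _ hlQ
      have := phige (x + y) _ _ hsum
      rw [valadd] at this
      linarith
    linarith
  have phizero : φ 0 = 0 := by
    have h1' : φ 0 ≤ 0 := by
      have := phile 0 0 0 (by simpa using hTQ h0)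
      simpa using this
    have h2' : (0:ℝ) ≤ φ 0 := by
      have := phige 0 0 0 (by simpa using hTQ h0)
      simpa using this
    linarith
  have phione : φ 1 = 1 := by
    have h1' : φ 1 ≤ 1 := by
      have := phile 1 1 0 (by simpa using hTQ h0)
      simpa using this
    have h2' : (1:ℝ) ≤ φ 1 := by
      have := phige 1 1 0 (by simpa using hTQ h0)
      simpa using this
    linarith
  have phineg : ∀ x : A, φ (-x) = - φ x := by
    intro x
    have := phiadd x (-x)
    simp only [add_neg_cancel, phizero] at this
    linarith
  have phinonneg : ∀ x ∈ Q, (0:ℝ) ≤ φ x := by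
    intro x hx
    have := phige x 0 0 (by simpa using hx)
    simpa using this
  have phiint : ∀ k : ℤ, φ ((k : ℤ) : A) = (k : ℝ) := by
    intro k
    induction k using Int.induction_on with
    | zero => simpa using phizero
    | succ n ih =>
        have heq : (((n:ℤ) + 1 : ℤ) : A) = ((n:ℤ) : A) + 1 := by push_cast; ring
        rw [heq, phiadd, ih, phione]; push_cast; ring
    | pred n ih =>
        have heq : ((-(n:ℤ) - 1 : ℤ) : A) = ((-(n:ℤ) : ℤ) : A) + (-1 : A) := by push_cast; ring
        rw [heq, phiadd, ih]
        have : φ (-1 : A) = -1 := by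
          have := phineg 1; rw [phione] at this; simpa using this
        rw [this]; push_cast; ring
  have phiintmul : ∀ (k : ℤ) (x : A), φ ((k : A) * x) = (k : ℝ) * φ x := by
    intro k x
    induction k using Int.induction_on with
    | zero => simpa using phizero
    | succ n ih =>
        have heq : (((n:ℤ) + 1 : ℤ) : A) * x = ((n:ℤ) : A) * x + x := by push_cast; ring
        push_cast at heq ⊢
        rw [heq, phiadd]
        push_cast at ih
        rw [ih]; ring
    | pred n ih =>
        have heq : ((-(n:ℤ) - 1 : ℤ) : A) * x = ((-(n:ℤ) : ℤ) : A) * x + (-x) := by push_cast; ring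
        push_cast at heq ⊢
        rw [heq, phiadd, phineg]
        push_cast at ih
        rw [ih]; ring
  have intposT : ∀ k : ℤ, 0 < k → ∀ m : ℕ, (k : A) * u ^ m ∈ T := by
    intro k hk m
    exact hmul _ (rrt_intnn h0 h1 hadd k (le_of_lt hk)) _ (rrt_pow h1 hmul hu m)
  have kpos : ∀ (k : ℤ) (m : ℕ), 0 < (k : ℝ) / (r:ℝ) ^ m → 0 < k := by
    intro k m hk
    have : (0:ℝ) < (k:ℝ) := by
      have := mul_pos hk (hrpos m)
      rw [div_mul_cancel₀] at this
      · exact this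
      · exact ne_of_gt (hrpos m)
    exact_mod_cast this
  have phimulT : ∀ t ∈ T, ∀ s ∈ T, φ (t * s) = φ t * φ s := by
    intro t ht s hs
    have h0t : (0:ℝ) ≤ φ t := phinonneg t (hTQ ht)
    have h0s : (0:ℝ) ≤ φ s := phinonneg s (hTQ hs)
    have h0ts : (0:ℝ) ≤ φ (t * s) := phinonneg _ (hTQ (hmul _ ht _ hs))
    have hub : ∀ ε : ℝ, 0 < ε → φ (t * s) ≤ (φ t + ε) * (φ s + ε) := by
      intro ε hε
      obtain ⟨k, m, hk1, hk2⟩ := dens (φ t) ε hε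
      obtain ⟨l, n, hl1, hl2⟩ := dens (φ s) ε hε
      have hkpos : 0 < k := kpos k m (lt_of_le_of_lt h0t hk1)
      have hkQ := memQ_of_lt t k m hk1
      have hlQ := memQ_of_lt s l n hl1
      have hsum : ((k * l : ℤ) : A) * u ^ (m + n) - t * s ∈ Q := by
        have heq : ((k * l : ℤ) : A) * u ^ (m + n) - t * s
            = ((k : A) * u ^ m) * ((l : A) * u ^ n - s) + s * ((k : A) * u ^ m - t) := by
          push_cast [pow_add]; ring
        rw [heq]
        exact hQadd _ (hQsmul _ (intposT k hkpos m) _ hlQ) _ (hQsmul _ hs _ hkQ)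
      have hle := phile (t * s) _ _ hsum
      rw [valmul] at hle
      calc φ (t * s) ≤ ((k : ℝ) / (r:ℝ) ^ m) * ((l : ℝ) / (r:ℝ) ^ n) := hle
      _ ≤ (φ t + ε) * (φ s + ε) := by
          apply mul_le_mul (le_of_lt hk2) (le_of_lt hl2)
          · exact le_trans h0s (by linarith)
          · linarith
    have hlb : φ t * φ s ≤ φ (t * s) := by
      rcases eq_or_lt_of_le h0t with hzt | hzt
      · rw [← hzt]; simpa using h0ts
      rcases eq_or_lt_of_le h0s with hzs | hzs
      · rw [← hzs]; simpa using h0ts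
      have step : ∀ ε : ℝ, 0 < ε → ε < φ t → ε < φ s →
          (φ t - ε) * (φ s - ε) ≤ φ (t * s) := by
        intro ε hε hεt hεs
        obtain ⟨k, m, hk1, hk2⟩ := dens (φ t - ε) ε hε
        obtain ⟨l, n, hl1, hl2⟩ := dens (φ s - ε) ε hε
        have hkpos : 0 < k := kpos k m (lt_trans (by linarith) hk1)
        have hlpos : 0 < l := kpos l n (lt_trans (by linarith) hl1)
        have hkQ := memQ_of_gt t k m (by linarith)
        have hlQ := memQ_of_gt s l n (by linarith)
        have hsum : t * s - ((k * l : ℤ) : A) * u ^ (m + n) ∈ Q := by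
          have heq : t * s - ((k * l : ℤ) : A) * u ^ (m + n)
              = t * (s - (l : A) * u ^ n) + ((l : A) * u ^ n) * (t - (k : A) * u ^ m) := by
            push_cast [pow_add]; ring
          rw [heq]
          exact hQadd _ (hQsmul _ ht _ hlQ) _ (hQsmul _ (intposT l hlpos n) _ hkQ)
        have hge := phige (t * s) _ _ hsum
        rw [valmul] at hge
        calc (φ t - ε) * (φ s - ε) ≤ ((k : ℝ) / (r:ℝ) ^ m) * ((l : ℝ) / (r:ℝ) ^ n) := by
              apply mul_le_mul (le_of_lt hk1) (le_of_lt hl1) (by linarith)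
              have : (0:ℝ) < (k : ℝ) / (r:ℝ) ^ m := by positivity
              linarith
        _ ≤ φ (t * s) := hge
      by_contra hcon
      push_neg at hcon
      set c := φ t * φ s - φ (t * s) with hc
      have hcpos : 0 < c := by simp only [hc]; linarith
      set ε0 : ℝ := min (min (φ t / 2) (φ s / 2)) (c / (φ t + φ s + 1)) with hε0
      have hε0pos : 0 < ε0 := by
        apply lt_min (lt_min (by linarith) (by linarith))
        positivity
      have hε0t : ε0 < φ t := lt_of_le_of_lt (le_trans (min_le_left _ _) (min_le_left _ _)) (by linarith)
      have hε0s : ε0 < φ s := lt_of_le_of_lt (le_trans (min_le_left _ _) (min_le_right _ _)) (by linarith)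
      have hε0c : ε0 * (φ t + φ s + 1) ≤ c := by
        have h2 : ε0 ≤ c / (φ t + φ s + 1) := min_le_right _ _
        rw [le_div_iff₀ (by linarith)] at h2
        exact h2
      have := step ε0 hε0pos hε0t hε0s
      nlinarith [sq_nonneg ε0, mul_pos hε0pos hε0pos]
    have hub' : φ (t * s) ≤ φ t * φ s := by
      by_contra hcon
      push_neg at hcon
      set c := φ (t * s) - φ t * φ s with hc
      have hcpos : 0 < c := by simp only [hc]; linarith
      set ε0 : ℝ := min 1 (c / (φ t + φ s + 2)) with hε0
      have hε0pos : 0 < ε0 := lt_min one_pos (by positivity)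
      have hε0le : ε0 ≤ 1 := min_le_left _ _
      have hε0c : ε0 * (φ t + φ s + 2) ≤ c := by
        have h2 : ε0 ≤ c / (φ t + φ s + 2) := min_le_right _ _
        rw [le_div_iff₀ (by linarith)] at h2
        exact h2
      have := hub ε0 hε0pos
      nlinarith [mul_pos hε0pos hε0pos]
    linarith
  have phimul : ∀ x y : A, φ (x * y) = φ x * φ y := by
    intro x y
    obtain ⟨nx, t, ht, hx⟩ := harch x
    obtain ⟨ny, s, hs, hy⟩ := harch y
    have hxmul : x * y = ((nx * ny : ℤ) : A) + (((nx : A) * s + (ny : A) * t) + t * s) := by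
      rw [hx, hy]; push_cast; ring
    have e1 : φ (x * y) = (nx : ℝ) * (ny : ℝ) + ((nx : ℝ) * φ s + (ny : ℝ) * φ t) + φ t * φ s := by
      rw [hxmul, phiadd, phiadd, phiadd, phiint, phiintmul, phiintmul, phimulT t ht s hs]
      push_cast; ring
    have e2 : φ x = (nx : ℝ) + φ t := by rw [hx, phiadd, phiint]
    have e3 : φ y = (ny : ℝ) + φ s := by rw [hy, phiadd, phiint]
    rw [e1, e2, e3]; ring
  refine ⟨{ toFun := φ, map_one' := phione, map_mul' := phimul, map_zero' := phizero,
            map_add' := phiadd }, ?_⟩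
  intro x hx
  exact phinonneg x hx
end Hom

theorem real_representation_theorem (A : Type*) [CommRing A] (T : Set A)
    (h0 : (0 : A) ∈ T) (h1 : (1 : A) ∈ T)
    (hadd : ∀ x ∈ T, ∀ y ∈ T, x + y ∈ T)
    (hmul : ∀ x ∈ T, ∀ y ∈ T, x * y ∈ T)
    (harch : ∀ a : A, ∃ n : ℤ, ∃ t ∈ T, a = (n : A) + t)
    (hdiv : ∃ r : ℕ, 2 ≤ r ∧ ∃ u : A, (r : A) * u = 1 ∧ u ∈ T)
    (a : A)
    (hpos : ∀ φ : A →+* ℝ, (∀ t ∈ T, 0 ≤ φ t) → 0 < φ a) :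
    a ∈ T := by
  by_contra ha
  obtain ⟨r, hr, u, hru, hu⟩ := hdiv
  set S : Set (Set A) := {Q | T ⊆ Q ∧ (∀ x ∈ Q, ∀ y ∈ Q, x + y ∈ Q) ∧
      (∀ t ∈ T, ∀ x ∈ Q, t * x ∈ Q) ∧ (-1 : A) ∉ Q} with hS
  set Q0 : Set A := {x | ∃ t₀ ∈ T, ∃ t₁ ∈ T, x = t₀ + t₁ * (-a)} with hQ0
  have hTQ0 : T ⊆ Q0 := by
    intro t ht
    exact ⟨t, ht, 0, h0, by ring⟩
  have hQ0S : Q0 ∈ S := by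
    refine ⟨hTQ0, ?_, ?_, ?_⟩
    · rintro x ⟨t₀, ht₀, t₁, ht₁, rfl⟩ y ⟨s₀, hs₀, s₁, hs₁, rfl⟩
      exact ⟨t₀ + s₀, hadd _ ht₀ _ hs₀, t₁ + s₁, hadd _ ht₁ _ hs₁, by ring⟩
    · rintro t ht x ⟨t₀, ht₀, t₁, ht₁, rfl⟩
      exact ⟨t * t₀, hmul _ ht _ ht₀, t * t₁, hmul _ ht _ ht₁, by ring⟩
    · rintro ⟨t₀, ht₀, t₁, ht₁, heq⟩
      apply ha
      have htc : t₁ * a - 1 ∈ T := by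
        have : t₁ * a - 1 = t₀ := by linear_combination heq
        rw [this]; exact ht₀
      exact rrt_div h0 h1 hadd hmul harch hr hru hu t₁ a ht₁ htc
  have chainub : ∀ c ⊆ S, IsChain (· ⊆ ·) c → c.Nonempty → ∃ ub ∈ S, ∀ s ∈ c, s ⊆ ub := by
    intro c hcS hchain hcne
    refine ⟨⋃₀ c, ⟨?_, ?_, ?_, ?_⟩, fun s hs => Set.subset_sUnion_of_mem hs⟩
    · obtain ⟨s, hs⟩ := hcne
      exact (hcS hs).1.trans (Set.subset_sUnion_of_mem hs)
    · rintro x ⟨s1, hs1, hx⟩ y ⟨s2, hs2, hy⟩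
      rcases hchain.total hs1 hs2 with h | h
      · exact ⟨s2, hs2, (hcS hs2).2.1 x (h hx) y hy⟩
      · exact ⟨s1, hs1, (hcS hs1).2.1 x hx y (h hy)⟩
    · rintro t ht x ⟨s1, hs1, hx⟩
      exact ⟨s1, hs1, (hcS hs1).2.2.1 t ht x hx⟩
    · rintro ⟨s1, hs1, hx⟩
      exact (hcS hs1).2.2.2 hx
  obtain ⟨Q, hQ0Q, hQmax⟩ := zorn_subset_nonempty S chainub Q0 hQ0S
  have hQS : Q ∈ S := hQmax.prop
  obtain ⟨hTQ, hQadd, hQsmul, hQn1⟩ := hQS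
  have hQtot : ∀ b : A, b ∈ Q ∨ -b ∈ Q := by
    intro b
    by_contra hb
    push_neg at hb
    obtain ⟨hb1, hb2⟩ := hb
    have key : ∀ b' : A, b' ∉ Q → ∃ q ∈ Q, ∃ t ∈ T, (-1 : A) = q + t * b' := by
      intro b' hb'
      set Q' : Set A := {x | ∃ q ∈ Q, ∃ t ∈ T, x = q + t * b'} with hQ'
      have hQQ' : Q ⊆ Q' := fun q hq => ⟨q, hq, 0, h0, by ring⟩
      have hbQ' : b' ∈ Q' := ⟨0, hTQ h0, 1, h1, by ring⟩
      by_contra hno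
      push_neg at hno
      have hQ'S : Q' ∈ S := by
        refine ⟨hTQ.trans hQQ', ?_, ?_, ?_⟩
        · rintro x ⟨q, hq, t, ht, rfl⟩ y ⟨q', hq', t', ht', rfl⟩
          exact ⟨q + q', hQadd _ hq _ hq', t + t', hadd _ ht _ ht', by ring⟩
        · rintro t ht x ⟨q, hq, s, hs, rfl⟩
          exact ⟨t * q, hQsmul _ ht _ hq, t * s, hmul _ ht _ hs, by ring⟩
        · rintro ⟨q, hq, t, ht, heq⟩
          exact hno q hq t ht heq
      have hsub := hQmax.2 hQ'S hQQ'
      exact hb' (hsub hbQ')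
    obtain ⟨q, hq, t, ht, he1⟩ := key b hb1
    obtain ⟨q', hq', t', ht', he2⟩ := key (-b) hb2
    have hneg : -(t + t') ∈ Q := by
      have heq : -(t + t') = t' * q + t * q' := by linear_combination t' * he1 + t * he2
      rw [heq]
      exact hQadd _ (hQsmul _ ht' _ hq) _ (hQsmul _ ht _ hq')
    obtain ⟨B1, hB1⟩ := rrt_bound h0 h1 hadd harch b
    obtain ⟨B2, hB2⟩ := rrt_bound h0 h1 hadd harch (-b)
    set B := B1 + B2 with hB
    have hBm : (B : A) - b ∈ T := by
      have heq : (B : A) - b = ((B2 : ℕ) : A) + ((B1 : A) - b) := by rw [hB]; push_cast; ring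
      rw [heq]; exact hadd _ (rrt_nat h0 h1 hadd _) _ hB1
    have hBp : (B : A) + b ∈ T := by
      have heq : (B : A) + b = ((B1 : ℕ) : A) + ((B2 : A) - (-b)) := by rw [hB]; push_cast; ring
      rw [heq]; exact hadd _ (rrt_nat h0 h1 hadd _) _ hB2
    have m1 : t * (B : A) - 1 ∈ Q := by
      have heq : t * (B : A) - 1 = q + t * ((B : A) + b) := by linear_combination he1
      rw [heq]; exact hQadd _ hq _ (hTQ (hmul _ ht _ hBp))
    have m2 : t' * (B : A) - 1 ∈ Q := by
      have heq : t' * (B : A) - 1 = q' + t' * ((B : A) - b) := by linear_combination he2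
      rw [heq]; exact hQadd _ hq' _ (hTQ (hmul _ ht' _ hBm))
    have m3 : (B : A) * (-(t + t')) ∈ Q := hQsmul _ (rrt_nat h0 h1 hadd B) _ hneg
    have hm2 : (-2 : A) ∈ Q := by
      have heq : (-2 : A) = (t * (B : A) - 1) + (t' * (B : A) - 1) + (B : A) * (-(t + t')) := by
        ring
      rw [heq]; exact hQadd _ (hQadd _ m1 _ m2) _ m3
    apply hQn1
    have heq : (-1 : A) = (-2 : A) + 1 := by ring
    rw [heq]; exact hQadd _ hm2 _ (hTQ h1)
  obtain ⟨φR, hφR⟩ := rrt_hom h0 h1 hadd hmul harch hr hru hu Q hTQ hQadd hQsmul hQtot hQn1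
  have hp : 0 < φR a := hpos φR (fun t ht => hφR t (hTQ ht))
  have hma : -a ∈ Q := hQ0Q ⟨0, h0, 1, h1, by ring⟩
  have hge := hφR _ hma
  rw [map_neg] at hge
  linarith
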